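/- The coface relation on the set of integral cones in a lattice L, defined by σ′ ⪯ σ if and only if σ′ = σ − κ for some subcone κ ⊆ σ, is a partial order: it is reflexive, antisymmetric, and transitive. In particular, for transitivity: if σ′ = (σ − κ) − ν for subcones κ ⊆ σ and ν ⊆ σ − κ, then σ′ = σ − (σ ∩ (−σ′)). -/

import Mathlib

open Pointwise

/-- An integral cone in `L`: a subset containing `0` and closed under addition. -/
def IsCone {L : Type*} [AddCommMonoid L] (σ : Set L) : Prop :=
  0 ∈ σ ∧ ∀ a ∈ σ, ∀ b ∈ σ, a + b ∈ σ

/-- `σ'` is a coface of `σ`: the localisation `σ − κ` of `σ` at a subcone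
`κ ⊆ σ`. -/
def IsCoface {L : Type*} [AddCommGroup L] (σ' σ : Set L) : Prop :=
  ∃ κ : Set L, IsCone κ ∧ κ ⊆ σ ∧ σ' = σ - κ

lemma cone_sub {L : Type*} [AddCommGroup L] {σ κ : Set L} (hσ : IsCone σ)
    (hκ : IsCone κ) : IsCone (σ - κ) := by
  constructor
  · exact ⟨0, hσ.1, 0, hκ.1, by simp⟩
  · rintro x ⟨a, ha, b, hb, rfl⟩ y ⟨c, hc, d, hd, rfl⟩
    exact ⟨a + c, hσ.2 a ha c hc, b + d, hκ.2 b hb d hd, by beta_reduce; abel⟩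

lemma subset_sub {L : Type*} [AddCommGroup L] {σ κ : Set L} (hκ : (0:L) ∈ κ) :
    σ ⊆ σ - κ := fun x hx => ⟨x, hx, 0, hκ, by simp⟩

lemma trans_formula {L : Type*} [AddCommGroup L] (σ κ ν σ' : Set L)
    (hσ : IsCone σ) (hκ : IsCone κ) (hκσ : κ ⊆ σ) (hν : IsCone ν)
    (hνs : ν ⊆ σ - κ) (h : σ' = (σ - κ) - ν) : σ' = σ - (σ ∩ (-σ')) := by
  have hσ'cone : IsCone σ' := h ▸ cone_sub (cone_sub hσ hκ) hν
  have hsub1 : σ ⊆ σ - κ := subset_sub hκ.1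
  have hsub2 : σ - κ ⊆ σ' := h ▸ subset_sub hν.1
  have hσσ' : σ ⊆ σ' := hsub1.trans hsub2
  apply Set.Subset.antisymm
  · -- σ' ⊆ σ - (σ ∩ -σ')
    rintro x hx
    rw [h] at hx
    obtain ⟨y, ⟨a, ha, k, hk, rfl⟩, n, hn, rfl⟩ := hx
    obtain ⟨b, hb, k', hk', hbk⟩ := hνs hn
    refine ⟨a + k', hσ.2 a ha k' (hκσ hk'), k + b, ⟨hσ.2 k (hκσ hk) b hb, ?_⟩, ?_⟩
    · -- -(k+b) ∈ σ'
      show -(k + b) ∈ σ'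
      have hnegk : -k ∈ σ' := hsub2 ⟨0, hσ.1, k, hk, by simp⟩
      have hnegk' : -k' ∈ σ' := hsub2 ⟨0, hσ.1, k', hk', by simp⟩
      have hnegn : -n ∈ σ' := by
        rw [h]; exact ⟨0, (cone_sub hσ hκ).1, n, hn, by simp⟩
      have : (-k) + ((-n) + (-k')) ∈ σ' :=
        hσ'cone.2 _ hnegk _ (hσ'cone.2 _ hnegn _ hnegk')
      have heq : (-k) + ((-n) + (-k')) = -(k + b) := by
        rw [← hbk]; beta_reduce; abel
      rwa [heq] at this
    · rw [← hbk]; beta_reduce; abel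
  · -- σ - (σ ∩ -σ') ⊆ σ'
    rintro x ⟨a, ha, m, ⟨hmσ, hmσ'⟩, rfl⟩
    simpa [sub_eq_add_neg] using hσ'cone.2 a (hσσ' ha) (-m) hmσ'

/-- the coface relation is a partial order on the integral cones
in a lattice; for transitivity, `(σ − κ) − ν = σ − (σ ∩ (−σ'))`. -/
theorem stmt4 {L : Type*} [AddCommGroup L] [Module.Free ℤ L] [Module.Finite ℤ L] :
    -- reflexivity
    (∀ σ : Set L, IsCone σ → IsCoface σ σ) ∧
    -- antisymmetry
    (∀ σ σ' : Set L, IsCone σ → IsCone σ' →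
      IsCoface σ' σ → IsCoface σ σ' → σ = σ') ∧
    -- transitivity
    (∀ σ σ' σ'' : Set L, IsCone σ →
      IsCoface σ' σ → IsCoface σ'' σ' → IsCoface σ'' σ) ∧
    -- explicit formula for transitivity
    (∀ σ κ ν σ' : Set L, IsCone σ → IsCone κ → κ ⊆ σ → IsCone ν → ν ⊆ σ - κ →
      σ' = (σ - κ) - ν → σ' = σ - (σ ∩ (-σ'))) := by
  refine ⟨?_, ?_, ?_, trans_formula⟩
  · intro σ hσ
    refine ⟨{0}, ⟨rfl, by simp⟩, by simpa using hσ.1, ?_⟩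
    ext x
    simp [Set.mem_sub]
  · rintro σ σ' hσ hσ' ⟨κ, hκ, hκσ, rfl⟩ ⟨κ', hκ', hκ'σ, h⟩
    have h2 : σ - κ ⊆ σ := by
      have := subset_sub (σ := σ - κ) hκ'.1
      rwa [← h] at this
    exact Set.Subset.antisymm (subset_sub hκ.1) h2
  · rintro σ σ' σ'' hσ ⟨κ, hκ, hκσ, rfl⟩ ⟨ν, hν, hνσ, rfl⟩
    refine ⟨σ ∩ (-((σ - κ) - ν)), ?_, Set.inter_subset_left, ?_⟩
    · have hc : IsCone ((σ - κ) - ν) := cone_sub (cone_sub hσ hκ) hν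
      refine ⟨⟨hσ.1, Set.mem_neg.2 (by simpa using hc.1)⟩, ?_⟩
      rintro a ⟨ha1, ha2⟩ b ⟨hb1, hb2⟩
      refine ⟨hσ.2 a ha1 b hb1, ?_⟩
      have := hc.2 _ (Set.mem_neg.1 ha2) _ (Set.mem_neg.1 hb2)
      rw [Set.mem_neg, neg_add]
      exact this
    · exact trans_formula σ κ ν _ hσ hκ hκσ hν hνσ rfl
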